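/- Assume (H1). For every real number φ₀, if (u₁, v₁) and (u₂, v₂) are two pairs of positive reals such that both (u₁, v₁, φ₀) and (u₂, v₂, φ₀) satisfy the system (AE), then u₁ = u₂ and v₁ = v₂. (Uniqueness part of Theorem 2.3.) -/
import Mathlib

lemma logdiff_pos {x y : ℝ} (hx : 0 < x) (hy : 0 < y) (hne : x ≠ y) :
    0 < (Real.log x - Real.log y) * (x - y) := by
  rcases lt_or_gt_of_ne hne with h | h
  · have := Real.log_lt_log hx h
    nlinarith
  · have := Real.log_lt_log hy h
    nlinarith

set_option maxHeartbeats 1000000 in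
/-- Uniqueness part of Theorem 2.3: under (H1), for each `φ₀` the positive
solution of the algebraic system (AE) is unique. -/
theorem stmt_1 (d₁ d₂ θ₁ θ₂ g₁₁ g₁₂ g₂₁ g₂₂ c₁ c₂ : ℝ)
    (hd₁ : 0 < d₁) (hd₂ : 0 < d₂) (hθ₁ : 0 < θ₁) (hθ₂ : θ₂ < 0)
    (hg₁₁ : 0 < g₁₁) (hg₁₂ : 0 < g₁₂) (hg₂₁ : 0 < g₂₁) (hg₂₂ : 0 < g₂₂)
    (hH1 : 0 ≤ g₁₁ * g₂₂ - g₁₂ * g₂₁) :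
    ∀ φ₀ u₁ v₁ u₂ v₂ : ℝ, 0 < u₁ → 0 < v₁ → 0 < u₂ → 0 < v₂ →
      d₁ * Real.log u₁ + θ₁ * φ₀ + g₁₁ * u₁ + g₁₂ * v₁ = c₁ →
      d₂ * Real.log v₁ + θ₂ * φ₀ + g₂₁ * u₁ + g₂₂ * v₁ = c₂ →
      d₁ * Real.log u₂ + θ₁ * φ₀ + g₁₁ * u₂ + g₁₂ * v₂ = c₁ →
      d₂ * Real.log v₂ + θ₂ * φ₀ + g₂₁ * u₂ + g₂₂ * v₂ = c₂ →
      u₁ = u₂ ∧ v₁ = v₂ := by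
  intro φ₀ u₁ v₁ u₂ v₂ hu₁ hv₁ hu₂ hv₂ e1 e2 e3 e4
  set a := u₁ - u₂ with ha_def
  set b := v₁ - v₂ with hb_def
  have E1 : d₁ * (Real.log u₁ - Real.log u₂) + g₁₁ * a + g₁₂ * b = 0 := by
    simp only [ha_def, hb_def]; linarith
  have E2 : d₂ * (Real.log v₁ - Real.log v₂) + g₂₁ * a + g₂₂ * b = 0 := by
    simp only [ha_def, hb_def]; linarith
  have hu : u₁ = u₂ := by
    by_contra hne
    have hL : 0 < (Real.log u₁ - Real.log u₂) * a := logdiff_pos hu₁ hu₂ hne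
    have ha2 : 0 < a * a := by
      have : a ≠ 0 := sub_ne_zero_of_ne hne
      exact mul_self_pos.2 this
    -- multiply E1 by a
    have h1 : g₁₁ * (a * a) + g₁₂ * (b * a) < 0 := by nlinarith
    have hab : a * b < 0 := by nlinarith
    have hvne : v₁ ≠ v₂ := by
      intro h
      have : b = 0 := by simp [hb_def, h]
      nlinarith
    have hM : 0 < (Real.log v₁ - Real.log v₂) * b := logdiff_pos hv₁ hv₂ hvne
    have hb2 : 0 < b * b := by
      have : b ≠ 0 := sub_ne_zero_of_ne hvne
      exact mul_self_pos.2 this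
    have h2 : g₂₂ * (b * b) + g₂₁ * (a * b) < 0 := by nlinarith
    have p1 : g₁₁ * (a * a) < g₁₂ * (-(a * b)) := by nlinarith
    have p2 : g₂₂ * (b * b) < g₂₁ * (-(a * b)) := by nlinarith
    have prod : g₁₁ * (a * a) * (g₂₂ * (b * b)) <
        g₁₂ * -(a * b) * (g₂₁ * -(a * b)) :=
      mul_lt_mul'' p1 p2 (le_of_lt (mul_pos hg₁₁ ha2)) (le_of_lt (mul_pos hg₂₂ hb2))
    have hnn : 0 ≤ (g₁₁ * g₂₂ - g₁₂ * g₂₁) * ((a * b) * (a * b)) :=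
      mul_nonneg hH1 (mul_self_nonneg _)
    nlinarith [prod, hnn]
  subst hu
  refine ⟨rfl, ?_⟩
  have hb0 : g₁₂ * b = 0 := by
    rw [hb_def]; linear_combination e1 - e3
  have : b = 0 := by
    rcases mul_eq_zero.1 hb0 with h | h
    · exact absurd h (ne_of_gt hg₁₂)
    · exact h
  have := hb_def ▸ this
  linarith
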